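/- Let y ∈ (ℤ/2)^r be nonzero and M_y = A_{K_2}^{y_1} ⊗ ⋯ ⊗ A_{K_2}^{y_r}. Let B = I_{N} ⊗ M_y for any N ≥ 1. Then exp(-i(π/2)B) = -i·(I_N ⊗ M_y) and exp(-iπB) = -I_{N·2^r}. Consequently, the graph with adjacency matrix B admits perfect state transfer at time π/2 and is periodic with period π. -/

import Mathlib

open Kronecker

/-- Adjacency matrix of the complete graph `K_n`, as a complex matrix. -/
noncomputable def Kadj (n : ℕ) : Matrix (Fin n) (Fin n) ℂ :=
  Matrix.of fun i j => if i = j then 0 else 1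

/-- Adjacency matrix of `K_2`, indexed by `ZMod 2`. -/
noncomputable def A2 : Matrix (ZMod 2) (ZMod 2) ℂ :=
  Matrix.of fun i j => if i = j then 0 else 1

/-- Kronecker product of a family of matrices. -/
noncomputable def kronC {d : ℕ} {n : Fin d → ℕ}
    (M : ∀ i, Matrix (Fin (n i)) (Fin (n i)) ℂ) :
    Matrix (∀ i, Fin (n i)) (∀ i, Fin (n i)) ℂ :=
  Matrix.of fun u v => ∏ i, M i (u i) (v i)

/-- `M_a = A_{K_2}^{a_1} ⊗ ⋯ ⊗ A_{K_2}^{a_r}` for `a ∈ (ℤ/2)^r`. -/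
noncomputable def cube {r : ℕ} (a : Fin r → ZMod 2) :
    Matrix (Fin r → ZMod 2) (Fin r → ZMod 2) ℂ :=
  Matrix.of fun u v => ∏ j, (if a j = 1 then A2 else 1) (u j) (v j)

/-- `A_{K_{n_1}}^{a_1} ⊗ ⋯ ⊗ A_{K_{n_d}}^{a_d}`. -/
noncomputable def compKron {d : ℕ} (n : Fin d → ℕ) (a : Fin d → ZMod 2) :
    Matrix (∀ i, Fin (n i)) (∀ i, Fin (n i)) ℂ :=
  kronC fun i => if a i = 1 then Kadj (n i) else 1

/-- Hamming weight. -/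
def wt {m : ℕ} (a : Fin m → ZMod 2) : ℕ :=
  (Finset.univ.filter fun i => a i = 1).card

/-- for nonzero `y ∈ (ℤ/2)^r` and `B = I_N ⊗ M_y`,
`exp(-i(π/2)B) = -i·B` and `exp(-iπB) = -I`; consequently the graph admits perfect
state transfer at time `π/2` and is periodic with period `π`. -/
lemma cube_apply {r : ℕ} (y u v : Fin r → ZMod 2) :
    cube y u v = if v = u + y then 1 else 0 := by
  have h2 : ∀ a : ZMod 2, a = 0 ∨ a = 1 := by decide
  have key : ∀ (a su sv : ZMod 2), (if a = 1 then A2 else 1) su sv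
      = if sv = su + a then (1:ℂ) else 0 := by
    intro a su sv
    rcases h2 a with ha | ha <;> rcases h2 su with hu | hu <;> rcases h2 sv with hv | hv <;>
      simp +decide [ha, hu, hv, A2, Matrix.one_apply]
  show (∏ j, (if y j = 1 then A2 else 1) (u j) (v j)) = _
  simp_rw [key (y _) (u _) (v _)]
  rw [Fintype.prod_boole]
  congr 1
  simp [funext_iff, eq_comm]

lemma cube_mul_self {r : ℕ} (y : Fin r → ZMod 2) : cube y * cube y = 1 := by
  ext u w
  rw [Matrix.mul_apply]
  simp_rw [cube_apply, boole_mul, Finset.sum_ite_eq' Finset.univ (u + y)]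
  have hyy : u + y + y = u := by
    funext j
    simp [add_assoc, CharTwo.add_self_eq_zero (y j)]
  simp [hyy, Matrix.one_apply, eq_comm]

lemma exp_smul_of_sq_eq_one {n : Type*} [Fintype n] [DecidableEq n]
    (A : Matrix n n ℂ) (h : A * A = 1) (c : ℂ) :
    NormedSpace.exp (c • A) = Complex.cosh c • 1 + Complex.sinh c • A := by
  letI : SeminormedRing (Matrix n n ℂ) := Matrix.linftyOpSemiNormedRing
  letI : NormedRing (Matrix n n ℂ) := Matrix.linftyOpNormedRing
  letI : NormedAlgebra ℂ (Matrix n n ℂ) := Matrix.linftyOpNormedAlgebra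
  have expand : ∀ x y z w : ℂ,
      (x • (1 : Matrix n n ℂ) + y • A) * (z • 1 + w • A)
        = (x * z + y * w) • 1 + (x * w + y * z) • A := by
    intro x y z w
    simp only [add_mul, mul_add, smul_mul_assoc, mul_smul_comm, smul_smul, one_mul, mul_one, h]
    module
  set φ : ℂ × ℂ →+* Matrix n n ℂ :=
    { toFun := fun p => ((p.1 + p.2) / 2) • 1 + ((p.1 - p.2) / 2) • A
      map_one' := by norm_num
      map_mul' := by
        intro p q
        simp only [Prod.fst_mul, Prod.snd_mul]
        rw [expand]
        congr 1
        · congr 1; ring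
        · congr 1; ring
      map_zero' := by norm_num
      map_add' := by
        intro p q
        simp only [Prod.fst_add, Prod.snd_add]
        rw [show (p.1 + q.1 + (p.2 + q.2)) / 2 = (p.1 + p.2) / 2 + (q.1 + q.2) / 2 by ring,
          show (p.1 + q.1 - (p.2 + q.2)) / 2 = (p.1 - p.2) / 2 + (q.1 - q.2) / 2 by ring,
          add_smul, add_smul]
        abel } with hφ
  have hcont : Continuous φ := by
    show Continuous fun p : ℂ × ℂ => ((p.1 + p.2) / 2) • (1 : Matrix n n ℂ) + ((p.1 - p.2) / 2) • A
    fun_prop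
  have hca : c • A = φ (c, -c) := by
    show c • A = ((c + -c) / 2) • (1 : Matrix n n ℂ) + ((c - -c) / 2) • A
    rw [show (c + -c) / 2 = 0 by ring, show (c - -c) / 2 = c by ring, zero_smul, zero_add]
  erw [hca, ← NormedSpace.map_exp φ hcont]
  have hexp : NormedSpace.exp ((c, -c) : ℂ × ℂ) = (Complex.exp c, Complex.exp (-c)) := by
    rw [Complex.exp_eq_exp_ℂ]
    exact Prod.ext (Prod.fst_exp _) (Prod.snd_exp _)
  rw [hexp]
  show ((Complex.exp c + Complex.exp (-c)) / 2) • (1 : Matrix n n ℂ)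
      + ((Complex.exp c - Complex.exp (-c)) / 2) • A = _
  rw [Complex.cosh, Complex.sinh]

theorem stmt13 (N r : ℕ) (hN : 1 ≤ N) (y : Fin r → ZMod 2) (hy : y ≠ 0) :
    NormedSpace.exp ((-Complex.I * ((Real.pi / 2 : ℝ) : ℂ)) •
        ((1 : Matrix (Fin N) (Fin N) ℂ) ⊗ₖ cube y)) =
      (-Complex.I) • ((1 : Matrix (Fin N) (Fin N) ℂ) ⊗ₖ cube y) ∧
    NormedSpace.exp ((-Complex.I * ((Real.pi : ℝ) : ℂ)) •
        ((1 : Matrix (Fin N) (Fin N) ℂ) ⊗ₖ cube y)) = -1 ∧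
    (∀ (x : Fin N) (u : Fin r → ZMod 2),
      (x, u) ≠ (x, u + y) ∧
      ‖(NormedSpace.exp ((-Complex.I * ((Real.pi / 2 : ℝ) : ℂ)) •
        ((1 : Matrix (Fin N) (Fin N) ℂ) ⊗ₖ cube y))) (x, u) (x, u + y)‖ = 1) ∧
    ∀ p : Fin N × (Fin r → ZMod 2),
      ‖(NormedSpace.exp ((-Complex.I * ((Real.pi : ℝ) : ℂ)) •
        ((1 : Matrix (Fin N) (Fin N) ℂ) ⊗ₖ cube y))) p p‖ = 1 := by
  set B : Matrix (Fin N × (Fin r → ZMod 2)) (Fin N × (Fin r → ZMod 2)) ℂ :=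
    (1 : Matrix (Fin N) (Fin N) ℂ) ⊗ₖ cube y with hBdef
  have hB : B * B = 1 := by
    rw [hBdef, ← Matrix.mul_kronecker_mul, cube_mul_self, mul_one, Matrix.one_kronecker_one]
  have e1 : -Complex.I * ((Real.pi / 2 : ℝ) : ℂ) = ((-(Real.pi / 2) : ℝ) : ℂ) * Complex.I := by
    push_cast; ring
  have e2 : -Complex.I * ((Real.pi : ℝ) : ℂ) = ((-Real.pi : ℝ) : ℂ) * Complex.I := by
    push_cast; ring
  have hc1 : Complex.cosh (-Complex.I * ((Real.pi / 2 : ℝ) : ℂ)) = 0 := by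
    rw [e1, Complex.cosh_mul_I, ← Complex.ofReal_cos]
    simp [Real.cos_pi_div_two]
  have hs1 : Complex.sinh (-Complex.I * ((Real.pi / 2 : ℝ) : ℂ)) = -Complex.I := by
    rw [e1, Complex.sinh_mul_I, ← Complex.ofReal_sin]
    simp [Real.sin_pi_div_two]
  have hc2 : Complex.cosh (-Complex.I * ((Real.pi : ℝ) : ℂ)) = -1 := by
    rw [e2, Complex.cosh_mul_I, ← Complex.ofReal_cos]
    simp [Real.cos_pi]
  have hs2 : Complex.sinh (-Complex.I * ((Real.pi : ℝ) : ℂ)) = 0 := by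
    rw [e2, Complex.sinh_mul_I, ← Complex.ofReal_sin]
    simp [Real.sin_pi]
  have h1 : NormedSpace.exp ((-Complex.I * ((Real.pi / 2 : ℝ) : ℂ)) • B)
      = (-Complex.I) • B := by
    rw [exp_smul_of_sq_eq_one B hB, hc1, hs1, zero_smul, zero_add]
  have h2 : NormedSpace.exp ((-Complex.I * ((Real.pi : ℝ) : ℂ)) • B) = -1 := by
    rw [exp_smul_of_sq_eq_one B hB, hc2, hs2, zero_smul, add_zero, neg_smul, one_smul]
  refine ⟨h1, h2, fun x u => ⟨?_, ?_⟩, fun p => ?_⟩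
  · intro heq
    have : u = u + y := congrArg Prod.snd heq
    exact hy (left_eq_add.mp this)
  · rw [h1]
    simp [hBdef, Matrix.kroneckerMap_apply, Matrix.one_apply_eq, cube_apply]
  · rw [h2]
    simp [Matrix.neg_apply, Matrix.one_apply_eq]
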